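/- Let G be a connected weighted graph with weights in (0,1), and let C* = {C_1,...,C_k} be a k-clustering of G minimizing the maximum cluster quality Φ (as defined via outgoing edges and maximum spanning trees). Then for every cluster C ∈ C* with |C| > 1 and every bipartition {A, A'} of C into nonempty parts, there exists a maximum spanning tree of G containing an edge with one endpoint in A and the other in A'. -/

import Mathlib

open scoped Classical
noncomputable section

namespace Bal

variable {V : Type*}

/-- Total weight of the edges of a graph. -/
def totalWeight {α : Type*} [Fintype α] (H : SimpleGraph α) (w : Sym2 α → ℝ) : ℝ :=
  ∑ e : Sym2 α, if e ∈ H.edgeSet then w e else 0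

/-- `T` is a maximum spanning tree of `G` w.r.t. the weight `w`. -/
def IsMaxSpanTree {α : Type*} [Fintype α] (G T : SimpleGraph α) (w : Sym2 α → ℝ) : Prop :=
  T ≤ G ∧ T.IsTree ∧
    ∀ T' : SimpleGraph α, T' ≤ G → T'.IsTree → totalWeight T' w ≤ totalWeight T w

/-- Weight function on the induced subgraph on `C`. -/
def subWeight (w : Sym2 V → ℝ) (C : Set V) : Sym2 C → ℝ :=
  fun e => w (e.map Subtype.val)

/-- Edges of `G` with exactly one endpoint in `C`. -/
def outEdges (G : SimpleGraph V) (C : Set V) : Set (Sym2 V) :=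
  {e | e ∈ G.edgeSet ∧ ∃ a b, e = s(a, b) ∧ a ∈ C ∧ b ∉ C}

/-- Edges of `G` with both endpoints in `C`. -/
def inEdges (G : SimpleGraph V) (C : Set V) : Set (Sym2 V) :=
  {e | e ∈ G.edgeSet ∧ ∀ x ∈ e, x ∈ C}

/-- `max(Out(C))`, with the convention `sSup ∅ = 0`. -/
def maxOut (G : SimpleGraph V) (w : Sym2 V → ℝ) (C : Set V) : ℝ :=
  sSup (w '' outEdges G C)

/-- `min(E(C))`, with the convention that it is `1` for singletons. -/
def minIn (G : SimpleGraph V) (w : Sym2 V → ℝ) (C : Set V) : ℝ :=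
  if C.Subsingleton then 1 else sInf (w '' inEdges G C)

/-- `min(MST(C))` : minimum weight of an edge of a maximum spanning tree of `G[C]`,
with the convention that it is `1` for singletons. -/
def minMST [Fintype V] (G : SimpleGraph V) (w : Sym2 V → ℝ) (C : Set V) : ℝ :=
  if C.Subsingleton then 1
  else if h : ∃ T : SimpleGraph C, IsMaxSpanTree (G.induce C) T (subWeight w C) then
    sInf (subWeight w C '' h.choose.edgeSet)
  else 1

/-- Quality measure of a cluster in a graph: `max(Out(C)) / min(MST(C))`. -/
def phi [Fintype V] (G : SimpleGraph V) (w : Sym2 V → ℝ) (C : Set V) : ℝ :=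
  maxOut G w C / minMST G w C

/-- Quality measure of a cluster in a tree: `max(Out(C)) / min(E(C))`. -/
def phiT (G : SimpleGraph V) (w : Sym2 V → ℝ) (C : Set V) : ℝ :=
  maxOut G w C / minIn G w C

/-- `𝒞` is a partition of `U ⊆ V` into `G`-connected parts. -/
def IsPartitionOn (G : SimpleGraph V) (U : Set V) (𝒞 : Set (Set V)) : Prop :=
  (∀ C ∈ 𝒞, C.Nonempty ∧ C ⊆ U ∧ (G.induce C).Connected) ∧
  (∀ C ∈ 𝒞, ∀ C' ∈ 𝒞, C ≠ C' → Disjoint C C') ∧ ⋃₀ 𝒞 = U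

/-- A `k`-clustering of a graph `G` on vertex set `V`. -/
def IsClustering (G : SimpleGraph V) (𝒞 : Set (Set V)) (k : ℕ) : Prop :=
  IsPartitionOn G Set.univ 𝒞 ∧ 𝒞.ncard = k

/-- Evaluation of a clustering of a graph (min-max quality measure, MST-based). -/
def eval [Fintype V] (G : SimpleGraph V) (w : Sym2 V → ℝ) (𝒞 : Set (Set V)) : ℝ :=
  sSup (phi G w '' 𝒞)

/-- Evaluation of a clustering of a tree. -/
def evalT (G : SimpleGraph V) (w : Sym2 V → ℝ) (𝒞 : Set (Set V)) : ℝ :=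
  sSup (phiT G w '' 𝒞)

/-- `𝒞` is an optimal `k`-clustering of `G`. -/
def IsOptimal [Fintype V] (G : SimpleGraph V) (w : Sym2 V → ℝ) (k : ℕ) (𝒞 : Set (Set V)) : Prop :=
  IsClustering G 𝒞 k ∧ ∀ 𝒟, IsClustering G 𝒟 k → eval G w 𝒞 ≤ eval G w 𝒟

/-- All edge weights lie in the open interval `(0,1)`. -/
def weightsOK (G : SimpleGraph V) (w : Sym2 V → ℝ) : Prop :=
  ∀ e ∈ G.edgeSet, 0 < w e ∧ w e < 1

/-- The set of connected components (as vertex sets) of a graph. -/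
def components (G : SimpleGraph V) : Set (Set V) :=
  {C | ∃ x : V, C = {y | G.Reachable x y}}

section AuxLemmas
open SimpleGraph

variable {α : Type*}

/-- Deleting one edge `s(a,b)`: any reachability statement degrades to reaching `a` or `b`. -/
private lemma reach_del {H : SimpleGraph α} {a b x y : α} (p : H.Walk x y) :
    (H.deleteEdges {s(a, b)}).Reachable x y ∨
      (((H.deleteEdges {s(a, b)}).Reachable x a ∨ (H.deleteEdges {s(a, b)}).Reachable x b) ∧
        ((H.deleteEdges {s(a, b)}).Reachable y a ∨ (H.deleteEdges {s(a, b)}).Reachable y b)) := by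
  induction p with
  | nil => exact Or.inl (Reachable.refl _)
  | @cons x z y h q ih =>
    by_cases hf : s(x, z) = (s(a, b) : Sym2 α)
    · right
      constructor
      · rcases Sym2.eq_iff.mp hf with ⟨rfl, rfl⟩ | ⟨rfl, rfl⟩
        · exact Or.inl (Reachable.refl _)
        · exact Or.inr (Reachable.refl _)
      · rcases ih with hr | ⟨_, hy⟩
        · rcases Sym2.eq_iff.mp hf with ⟨rfl, rfl⟩ | ⟨rfl, rfl⟩
          · exact Or.inr hr.symm
          · exact Or.inl hr.symm
        · exact hy
    · have hadj : (H.deleteEdges {s(a, b)}).Adj x z := by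
        simp only [deleteEdges_adj, Set.mem_singleton_iff]
        exact ⟨h, hf⟩
      rcases ih with hr | ⟨hz, hy⟩
      · exact Or.inl (hadj.reachable.trans hr)
      · exact Or.inr ⟨hz.imp (hadj.reachable.trans ·) (hadj.reachable.trans ·), hy⟩

private lemma reach_del' {H : SimpleGraph α} {a b x : α} (hr : H.Reachable x a) :
    (H.deleteEdges {s(a, b)}).Reachable x a ∨ (H.deleteEdges {s(a, b)}).Reachable x b := by
  obtain ⟨p⟩ := hr
  rcases reach_del (a := a) (b := b) p with h | ⟨h, _⟩
  · exact Or.inl h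
  · exact h

/-- A walk from inside `S` to outside `S` uses a crossing edge. -/
private lemma exists_cross_edge {H : SimpleGraph α} {S : Set α} {x y : α} (p : H.Walk x y)
    (hx : x ∈ S) (hy : y ∉ S) :
    ∃ u v, s(u, v) ∈ p.edges ∧ H.Adj u v ∧ u ∈ S ∧ v ∉ S := by
  induction p with
  | nil => exact absurd hx hy
  | @cons x z y h q ih =>
    by_cases hz : z ∈ S
    · obtain ⟨u, v, hm, h1, h2, h3⟩ := ih hz hy
      exact ⟨u, v, List.mem_cons_of_mem _ hm, h1, h2, h3⟩
    · exact ⟨x, z, List.mem_cons_self, h, hx, hz⟩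

private lemma connected_cross {H : SimpleGraph α} (hH : H.Preconnected) {S : Set α} {x y : α}
    (hx : x ∈ S) (hy : y ∉ S) : ∃ u v, H.Adj u v ∧ u ∈ S ∧ v ∉ S := by
  obtain ⟨p⟩ := hH x y
  obtain ⟨u, v, _, h⟩ := exists_cross_edge p hx hy
  exact ⟨u, v, h⟩

private lemma exists_adj_of_ne {H : SimpleGraph α} (hH : H.Preconnected) {x y : α}
    (hxy : x ≠ y) : ∃ u v, H.Adj u v := by
  obtain ⟨p⟩ := hH x y
  cases p with
  | nil => exact absurd rfl hxy
  | cons h _ => exact ⟨_, _, h⟩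

/-- An edge of a path in a tree separates the endpoints of the path. -/
private lemma sep_of_mem_path {T : SimpleGraph α} (hT : T.IsTree) {x y : α} {P : T.Walk x y}
    (hP : P.IsPath) {e : Sym2 α} (he : e ∈ P.edges) :
    ¬ (T.deleteEdges {e}).Reachable x y := by
  rintro ⟨q⟩
  set hq : T.Walk x y := q.mapLe (deleteEdges_le (G := T) {e}) with hqdef
  have huniq := hT.IsAcyclic.path_unique ⟨P, hP⟩ hq.toPath
  have hsub : (hq.toPath : T.Walk x y).edges ⊆ hq.edges := Walk.edges_toPath_subset hq
  have hPe : (hq.toPath : T.Walk x y) = P := by rw [← huniq]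
  have h1 : e ∈ hq.edges := hsub (by rw [hPe]; exact he)
  have h2 : hq.edges = q.edges := by
    rw [hqdef]
    show (Walk.map _ q).edges = _
    rw [Walk.edges_map]
    convert List.map_id q.edges using 2
    ext e'
    refine e'.ind (fun a b => ?_)
    simp [Hom.ofLE_apply]
  have h3 : e ∈ (T.deleteEdges {e}).edgeSet := q.edges_subset_edgeSet (h2 ▸ h1)
  rw [edgeSet_deleteEdges] at h3
  exact h3.2 rfl


/-- `totalWeight` as a sum over the edge finset. -/
private lemma totalWeight_eq {α : Type*} [Fintype α] (H : SimpleGraph α) (w : Sym2 α → ℝ) :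
    totalWeight H w = ∑ e ∈ H.edgeFinset, w e := by
  rw [totalWeight, ← Finset.sum_filter]
  congr 1
  ext e
  simp [mem_edgeFinset]

private lemma swap_weight {α : Type*} [Fintype α] {T T' : SimpleGraph α} {f e : Sym2 α}
    (hE : T'.edgeSet = (T.edgeSet \ {f}) ∪ {e}) (hf : f ∈ T.edgeSet) (he : e ∉ T.edgeSet)
    (w : Sym2 α → ℝ) :
    totalWeight T' w = totalWeight T w - w f + w e := by
  rw [totalWeight_eq, totalWeight_eq]
  have hEf : T'.edgeFinset = (T.edgeFinset \ {f}) ∪ {e} := by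
    ext e'
    simp only [mem_edgeFinset, hE, Finset.mem_union, Finset.mem_sdiff, Finset.mem_singleton,
      Set.mem_union, Set.mem_diff, Set.mem_singleton_iff]
  rw [hEf, Finset.sum_union, Finset.sum_sdiff_eq_sub, Finset.sum_singleton, Finset.sum_singleton]
  · rw [Finset.singleton_subset_iff, mem_edgeFinset]; exact hf
  · rw [Finset.disjoint_singleton_right, Finset.mem_sdiff, mem_edgeFinset]
    exact fun h => he h.1

/-- The exchange step: replacing the edge `s(a,b)` of a tree `T` by `s(u,v)`, where `u` is on
the `a`-side and `v` on the `b`-side, yields a tree. -/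
private lemma swap_tree {α : Type*} {T : SimpleGraph α} (hT : T.IsTree) {a b u v : α}
    (hab : T.Adj a b) (huv : u ≠ v) (he : s(u, v) ∉ T.edgeSet)
    (hua : (T.deleteEdges {s(a, b)}).Reachable u a)
    (hvb : (T.deleteEdges {s(a, b)}).Reachable v b) :
    ((T.deleteEdges {s(a, b)}) ⊔ fromEdgeSet {s(u, v)}).IsTree ∧
      ((T.deleteEdges {s(a, b)}) ⊔ fromEdgeSet {s(u, v)}).edgeSet
        = (T.edgeSet \ {s(a, b)}) ∪ {s(u, v)} := by
  set H := T.deleteEdges {s(a, b)} with hHdef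
  set T' := H ⊔ fromEdgeSet {s(u, v)} with hT'def
  have hHle : H ≤ T := deleteEdges_le _
  have hbridge : ¬ H.Reachable a b := by
    have := (isAcyclic_iff_forall_adj_isBridge.mp hT.IsAcyclic) hab
    rw [isBridge_iff] at this
    exact this
  have hT'edge : T'.edgeSet = (T.edgeSet \ {s(a, b)}) ∪ {s(u, v)} := by
    rw [hT'def, edgeSet_sup, hHdef, edgeSet_deleteEdges, edgeSet_fromEdgeSet]
    congr 1
    ext e'
    simp only [Set.mem_diff, Set.mem_singleton_iff, Set.mem_setOf_eq]
    refine ⟨fun h => h.1, fun h => ⟨h, ?_⟩⟩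
    rw [h]
    simp [Sym2.isDiag_iff_proj_eq, huv]
  have hT'adj : T'.Adj u v := by
    have h0 : (fromEdgeSet {s(u, v)}).Adj u v := by rw [fromEdgeSet_adj]; exact ⟨rfl, huv⟩
    exact (sup_adj _ _ _ _).mpr (Or.inr h0)
  have hHT' : H ≤ T' := le_sup_left
  have hconn : T'.Connected := by
    have key : ∀ x : α, T'.Reachable x u ∨ T'.Reachable x v := by
      intro x
      have hx : T.Reachable x a := hT.isConnected.preconnected x a
      rcases reach_del' (b := b) hx with h | h
      · exact Or.inl ((h.trans hua.symm).mono hHT')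
      · exact Or.inr ((h.trans hvb.symm).mono hHT')
    rw [connected_iff]
    refine ⟨fun x y => ?_, ⟨u⟩⟩
    have hx := key x
    have hy := key y
    have huvr : T'.Reachable u v := hT'adj.reachable
    rcases hx with hx | hx <;> rcases hy with hy | hy
    · exact hx.trans hy.symm
    · exact hx.trans (huvr.trans hy.symm)
    · exact hx.trans (huvr.symm.trans hy.symm)
    · exact hx.trans hy.symm
  have hHnouv : s(u, v) ∉ H.edgeSet := fun h => he (edgeSet_mono hHle h)
  have hacy : T'.IsAcyclic := by
    intro x c hc
    by_cases hm : s(u, v) ∈ c.edges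
    · have : T'.Adj u v ∧ (T' \ fromEdgeSet {s(u, v)}).Reachable u v :=
        (adj_and_reachable_delete_edges_iff_exists_cycle).mpr ⟨x, c, hc, hm⟩
      have hTT : (T' \ fromEdgeSet {s(u, v)}) = H := by
        ext p q
        simp only [sdiff_adj, hT'def, sup_adj, fromEdgeSet_adj, Set.mem_singleton_iff]
        constructor
        · rintro ⟨h1 | h1, h2⟩
          · exact h1
          · exact absurd ⟨h1.1, h1.2⟩ h2
        · intro h1
          refine ⟨Or.inl h1, fun h2 => ?_⟩
          exact hHnouv (h2.1 ▸ ((mem_edgeSet H).mpr h1))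
      rw [hTT] at this
      exact hbridge ((hua.symm.trans this.2).trans hvb)
    · have hce : ∀ e' ∈ c.edges, e' ∈ T.edgeSet := by
        intro e' he'
        have := c.edges_subset_edgeSet he'
        rw [hT'edge] at this
        rcases this with h | h
        · exact h.1
        · rw [Set.mem_singleton_iff] at h
          exact absurd (h ▸ he') hm
      exact hT.IsAcyclic (c.transfer T hce) (hc.transfer hce)
  exact ⟨⟨hconn, hacy⟩, hT'edge⟩

private lemma exists_maxSpanTree {α : Type*} [Fintype α] {G : SimpleGraph α} (hG : G.Connected)
    (w : Sym2 α → ℝ) : ∃ T : SimpleGraph α, IsMaxSpanTree G T w := by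
  haveI : Finite (SimpleGraph α) := Finite.of_injective _ edgeSet_injective
  -- first, a spanning tree exists
  have hsp : ∃ T : SimpleGraph α, T ≤ G ∧ T.IsTree := by
    obtain ⟨H, ⟨hHle, hHconn⟩, hmin⟩ := Set.exists_min_image {H : SimpleGraph α | H ≤ G ∧ H.Connected}
      (fun H => H.edgeFinset.card) (Set.toFinite _) ⟨G, le_rfl, hG⟩
    refine ⟨H, hHle, hHconn, ?_⟩
    by_contra hacy
    rw [IsAcyclic] at hacy
    push_neg at hacy
    obtain ⟨x, c, hc⟩ := hacy
    obtain ⟨p, q, hmem, hpq⟩ : ∃ p q, s(p, q) ∈ c.edges ∧ H.Adj p q := by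
      cases c with
      | nil => exact absurd hc Walk.IsCycle.not_of_nil
      | cons h c' => exact ⟨_, _, List.mem_cons_self, h⟩
    have hreach : (H \ fromEdgeSet {s(p, q)}).Reachable p q :=
      ((adj_and_reachable_delete_edges_iff_exists_cycle).mpr ⟨x, c, hc, hmem⟩).2
    have hreach' : (H.deleteEdges {s(p, q)}).Reachable p q := hreach
    have hconn' : (H.deleteEdges {s(p, q)}).Connected := by
      rw [connected_iff]
      refine ⟨fun y z => ?_, ⟨p⟩⟩
      obtain ⟨pw⟩ := hHconn.preconnected y z
      rcases reach_del (a := p) (b := q) pw with h | ⟨hy, hz⟩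
      · exact h
      · have hy' : (H.deleteEdges {s(p, q)}).Reachable y p := by
          rcases hy with h | h
          · exact h
          · exact h.trans hreach'.symm
        have hz' : (H.deleteEdges {s(p, q)}).Reachable z p := by
          rcases hz with h | h
          · exact h
          · exact h.trans hreach'.symm
        exact hy'.trans hz'.symm
    have hmemS : H.deleteEdges {s(p, q)} ∈ {H : SimpleGraph α | H ≤ G ∧ H.Connected} :=
      ⟨(deleteEdges_le _).trans hHle, hconn'⟩
    have hlt : (H.deleteEdges {s(p, q)}).edgeFinset.card < H.edgeFinset.card := by
      apply Finset.card_lt_card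
      rw [Finset.ssubset_iff_of_subset]
      · refine ⟨s(p, q), ?_, ?_⟩
        · rw [mem_edgeFinset]; exact (mem_edgeSet H).mpr hpq
        · rw [mem_edgeFinset, edgeSet_deleteEdges]
          simp
      · intro e' he'
        rw [mem_edgeFinset, edgeSet_deleteEdges] at he'
        rw [mem_edgeFinset]
        exact he'.1
    exact absurd (hmin _ hmemS) (not_le.mpr (lt_of_eq_of_lt (by congr; exact Subsingleton.elim _ _) hlt))
  obtain ⟨T, ⟨hTle, hTtree⟩, hmax⟩ := Set.exists_max_image {T : SimpleGraph α | T ≤ G ∧ T.IsTree}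
    (fun T => totalWeight T w) (Set.toFinite _) ⟨hsp.choose, hsp.choose_spec⟩
  exact ⟨T, hTle, hTtree, fun T' h1 h2 => hmax T' ⟨h1, h2⟩⟩

/-- Key exchange comparison: if the tree edge `s(a,b)` separates `p` from `q` in the max
spanning tree `T`, and `pq` is a `G`-edge, then `w s(p,q) ≤ w s(a,b)`; in case of equality there
is a max spanning tree containing `s(p,q)`. -/
private lemma sep_edge_le {α : Type*} [Fintype α] {G T : SimpleGraph α} {w : Sym2 α → ℝ}
    (hmax : IsMaxSpanTree G T w) {p q a b : α} (hpq : G.Adj p q) (hab : T.Adj a b)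
    (hsep : ¬ (T.deleteEdges {s(a, b)}).Reachable p q) :
    w s(p, q) ≤ w s(a, b) ∧
      (w s(p, q) = w s(a, b) → ∃ T'' : SimpleGraph α, IsMaxSpanTree G T'' w ∧ T''.Adj p q) := by
  obtain ⟨hTle, hTtree, hTmax⟩ := hmax
  by_cases hin : s(p, q) ∈ T.edgeSet
  · by_cases heq : s(p, q) = (s(a, b) : Sym2 α)
    · exact ⟨le_of_eq (by rw [heq]), fun _ => ⟨T, ⟨hTle, hTtree, hTmax⟩, (mem_edgeSet T).mp hin⟩⟩
    · exfalso
      apply hsep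
      apply Adj.reachable
      simp only [deleteEdges_adj, Set.mem_singleton_iff]
      exact ⟨(mem_edgeSet T).mp hin, heq⟩
  · have hbridge : ¬ (T.deleteEdges {s(a, b)}).Reachable a b := by
      have := (isAcyclic_iff_forall_adj_isBridge.mp hTtree.IsAcyclic) hab
      rw [isBridge_iff] at this
      exact this
    have hpa := reach_del' (b := b) (hTtree.isConnected.preconnected p a)
    have hqa := reach_del' (b := b) (hTtree.isConnected.preconnected q a)
    have hor : ((T.deleteEdges {s(a, b)}).Reachable p a ∧ (T.deleteEdges {s(a, b)}).Reachable q b)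
        ∨ ((T.deleteEdges {s(a, b)}).Reachable p b ∧
            (T.deleteEdges {s(a, b)}).Reachable q a) := by
      rcases hpa with h1 | h1 <;> rcases hqa with h2 | h2
      · exact absurd (h1.trans h2.symm) hsep
      · exact Or.inl ⟨h1, h2⟩
      · exact Or.inr ⟨h1, h2⟩
      · exact absurd (h1.trans h2.symm) hsep
    have hswap : ((T.deleteEdges {s(a, b)}) ⊔ fromEdgeSet {s(p, q)}).IsTree ∧
        ((T.deleteEdges {s(a, b)}) ⊔ fromEdgeSet {s(p, q)}).edgeSet
          = (T.edgeSet \ {s(a, b)}) ∪ {s(p, q)} := by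
      rcases hor with ⟨h1, h2⟩ | ⟨h1, h2⟩
      · exact swap_tree hTtree hab hpq.ne hin h1 h2
      · rw [Sym2.eq_swap (a := a) (b := b)] at h1 h2
        have := swap_tree hTtree hab.symm hpq.ne hin h1 h2
        rw [Sym2.eq_swap (a := b) (b := a)] at this
        exact this
    set T' := (T.deleteEdges {s(a, b)}) ⊔ fromEdgeSet {s(p, q)} with hT'def
    have hT'le : T' ≤ G := by
      apply sup_le ((deleteEdges_le _).trans hTle)
      intro x y hxy
      rw [fromEdgeSet_adj] at hxy
      rcases Sym2.eq_iff.mp hxy.1 with ⟨rfl, rfl⟩ | ⟨rfl, rfl⟩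
      · exact hpq
      · exact hpq.symm
    have habT : s(a, b) ∈ T.edgeSet := (mem_edgeSet T).mpr hab
    have hw : totalWeight T' w = totalWeight T w - w s(a, b) + w s(p, q) :=
      swap_weight hswap.2 habT hin w
    have hle := hTmax T' hT'le hswap.1
    rw [hw] at hle
    constructor
    · linarith
    · intro heq
      refine ⟨T', ⟨hT'le, hswap.1, fun T₂ h1 h2 => ?_⟩, ?_⟩
      · rw [hw, heq]
        calc totalWeight T₂ w ≤ totalWeight T w := hTmax T₂ h1 h2
        _ = totalWeight T w - w s(a, b) + w s(a, b) := by ring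
      · have h0 : (fromEdgeSet {s(p, q)}).Adj p q := by
          rw [fromEdgeSet_adj]; exact ⟨rfl, hpq.ne⟩
        exact (sup_adj _ _ _ _).mpr (Or.inr h0)

/-- Given a `G`-edge leaving `S`, the max spanning tree has an edge leaving `S` of at least
that weight (with max spanning tree witness in the equality case). -/
private lemma cross_edge_le {α : Type*} [Fintype α] {G T : SimpleGraph α} {w : Sym2 α → ℝ}
    (hmax : IsMaxSpanTree G T w) {S : Set α} {x y : α} (hxy : G.Adj x y) (hx : x ∈ S)
    (hy : y ∉ S) :
    ∃ a b, T.Adj a b ∧ a ∈ S ∧ b ∉ S ∧ w s(x, y) ≤ w s(a, b) ∧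
      (w s(x, y) = w s(a, b) →
        ∃ T'' : SimpleGraph α, IsMaxSpanTree G T'' w ∧ T''.Adj x y) := by
  obtain ⟨pw⟩ := hmax.2.1.isConnected.preconnected x y
  set P := pw.toPath with hPdef
  obtain ⟨a, b, hmem, hab, haS, hbS⟩ := exists_cross_edge (P : T.Walk x y) hx hy
  have hsep := sep_of_mem_path hmax.2.1 P.2 hmem
  obtain ⟨h1, h2⟩ := sep_edge_le hmax hxy hab hsep
  exact ⟨a, b, hab, haS, hbS, h1, h2⟩

/-- Bottleneck property: every edge of a max spanning tree weighs at least as much as some edge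
of any connected spanning subgraph crossing the corresponding split. -/
private lemma bottleneck {α : Type*} [Fintype α] {G T S : SimpleGraph α} {w : Sym2 α → ℝ}
    (hmax : IsMaxSpanTree G T w) (hS : S ≤ G) (hScon : S.Connected) {a b : α} (hab : T.Adj a b) :
    ∃ x y, S.Adj x y ∧ w s(x, y) ≤ w s(a, b) := by
  set Q : Set α := {z | (T.deleteEdges {s(a, b)}).Reachable z a} with hQdef
  have haQ : a ∈ Q := Reachable.refl _
  have hbQ : b ∉ Q := by
    intro h
    have := (isAcyclic_iff_forall_adj_isBridge.mp hmax.2.1.IsAcyclic) hab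
    rw [isBridge_iff] at this
    exact this h.symm
  obtain ⟨x, y, hxy, hxQ, hyQ⟩ := connected_cross hScon.preconnected haQ hbQ
  have hsep : ¬ (T.deleteEdges {s(a, b)}).Reachable x y := fun h => hyQ (h.symm.trans hxQ)
  exact ⟨x, y, hxy, (sep_edge_le hmax (hS hxy) hab hsep).1⟩

private lemma walk_part {α : Type*} {F : SimpleGraph α} {𝒟 : Set (Set α)}
    (hinv : ∀ x y, F.Adj x y → ∀ D ∈ 𝒟, x ∈ D → y ∈ D) {x y : α} (p : F.Walk x y)
    {D : Set α} (hD : D ∈ 𝒟) (hy : y ∈ D) : x ∈ D := by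
  induction p with
  | nil => exact hy
  | cons h q ih => exact hinv _ _ h.symm D hD (ih hy)

private lemma induce_reachClass_connected {α : Type*} {H : SimpleGraph α} (a : α) :
    (H.induce {z | H.Reachable z a}).Connected := by
  have key : ∀ (z : α) (p : H.Walk z a) (hz : H.Reachable z a),
      (H.induce {z | H.Reachable z a}).Reachable ⟨z, hz⟩ ⟨a, Reachable.refl _⟩ := by
    intro z p
    induction p with
    | nil => intro hz; exact Reachable.refl _
    | @cons z z' a h q ih =>
      intro hz
      have hz' : H.Reachable z' a := ⟨q⟩
      have hadj : (H.induce {z | H.Reachable z a}).Adj ⟨z, hz⟩ ⟨z', hz'⟩ := h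
      exact hadj.reachable.trans (ih hz')
  rw [connected_iff]
  refine ⟨?_, ⟨⟨a, Reachable.refl _⟩⟩⟩
  rintro ⟨x, hx⟩ ⟨y, hy⟩
  obtain ⟨p⟩ := hx
  obtain ⟨q⟩ := hy
  exact (key x p _).trans (key y q _).symm

private lemma induce_connected_mono {α : Type*} {H H' : SimpleGraph α} (hle : H ≤ H')
    {s : Set α} (h : (H.induce s).Connected) : (H'.induce s).Connected :=
  h.mono (fun _ _ hxy => hle hxy)

private lemma induce_univ_connected {α : Type*} {H : SimpleGraph α} (h : H.Connected) :
    (H.induce Set.univ).Connected := by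
  obtain ⟨a⟩ := h.nonempty
  have : {z | H.Reachable z a} = Set.univ := Set.eq_univ_of_forall (fun z => h.preconnected z a)
  exact this ▸ induce_reachClass_connected a

private lemma reach_in_induce {α : Type*} {H : SimpleGraph α} {s : Set α}
    (hcon : (H.induce s).Connected) {x a : α} (hx : x ∈ s) (ha : a ∈ s) :
    H.Reachable x a := by
  have := hcon.preconnected ⟨x, hx⟩ ⟨a, ha⟩
  have := this.map (SimpleGraph.Embedding.induce s).toHom
  exact this

/-- The partition construction: removing `j - 1` lightest edges of the max spanning tree `T`
gives a partition into `j` parts. -/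
private lemma build {V : Type*} [Fintype V] {G : SimpleGraph V} {w : Sym2 V → ℝ}
    {T : SimpleGraph V} (hTle : T ≤ G) (hT : T.IsTree) (j : ℕ) (hj : 1 ≤ j) (hjle : j ≤ Fintype.card V) :
    ∃ (𝒟 : Set (Set V)) (F : SimpleGraph V), F ≤ T ∧
      IsPartitionOn G Set.univ 𝒟 ∧ 𝒟.ncard = j ∧
      (∀ D ∈ 𝒟, (F.induce D).Connected) ∧
      (∀ x y : V, F.Adj x y → ∀ D ∈ 𝒟, x ∈ D → y ∈ D) ∧
      (∀ e ∈ T.edgeSet, e ∉ F.edgeSet → ∀ e' ∈ F.edgeSet, w e ≤ w e') := by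
  induction j, hj using Nat.le_induction with
  | base =>
    have hne : Nonempty V := Fintype.card_pos_iff.mp hjle
    refine ⟨{Set.univ}, T, le_rfl, ⟨?_, ?_, ?_⟩, ?_, ?_, ?_, ?_⟩
    · rintro D rfl
      exact ⟨Set.univ_nonempty, Set.subset_univ _,
        induce_connected_mono hTle (induce_univ_connected hT.isConnected)⟩
    · rintro D rfl D' rfl hne'
      exact absurd rfl hne'
    · simp
    · simp
    · rintro D rfl
      exact induce_univ_connected hT.isConnected
    · rintro x y _ D rfl _
      trivial
    · intro e heT heF e' he'
      exact absurd heT heF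
  | succ j hj1 ih =>
    obtain ⟨𝒟, F, hFle, ⟨hparts, hdisj, hcover⟩, hcard, hicon, hpart, hmin⟩ :=
      ih (le_of_lt (Nat.lt_of_lt_of_le (Nat.lt_succ_self j) hjle))
    -- there is an `F`-edge
    have hcov : ∀ x : V, ∃ D ∈ 𝒟, x ∈ D := by
      intro x
      have : x ∈ ⋃₀ 𝒟 := hcover.symm ▸ Set.mem_univ x
      exact Set.mem_sUnion.mp this
    have hFedge : ∃ a b : V, F.Adj a b := by
      have hnontriv : ∃ D ∈ 𝒟, ∃ x ∈ D, ∃ y ∈ D, x ≠ y := by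
        by_contra h
        push_neg at h
        have hg : Function.Injective (fun x : V => (⟨(hcov x).choose, (hcov x).choose_spec.1⟩ :
            {D // D ∈ 𝒟})) := by
          intro x y hxy
          have h1 := (hcov x).choose_spec.2
          have h2 := (hcov y).choose_spec.2
          have h3 : (hcov x).choose = (hcov y).choose := congrArg Subtype.val hxy
          exact h _ (hcov x).choose_spec.1 x h1 y (h3 ▸ h2)
        have := Nat.card_le_card_of_injective _ hg
        rw [Nat.card_eq_fintype_card (α := V)] at this
        have h𝒟 : Nat.card {D // D ∈ 𝒟} = j := by
          rw [← Nat.card_coe_set_eq] at hcard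
          exact hcard
        omega
      obtain ⟨D₀, hD₀, x, hx, y, hy, hxy⟩ := hnontriv
      have hcon := hicon D₀ hD₀
      obtain ⟨u, v, huv⟩ := exists_adj_of_ne hcon.preconnected
        (by simp [Subtype.ext_iff]; exact hxy : (⟨x, hx⟩ : D₀) ≠ ⟨y, hy⟩)
      exact ⟨u, v, huv⟩
    -- pick the minimum weight `F`-edge
    have hFne : F.edgeFinset.Nonempty := by
      obtain ⟨a, b, hab⟩ := hFedge
      exact ⟨s(a, b), by rw [mem_edgeFinset]; exact (mem_edgeSet F).mpr hab⟩
    obtain ⟨f₀, hf₀, hf₀min⟩ := F.edgeFinset.exists_min_image w hFne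
    rw [mem_edgeFinset] at hf₀
    obtain ⟨a, b, rfl⟩ : ∃ a b, f₀ = s(a, b) := f₀.ind (fun a b => ⟨a, b, rfl⟩)
    have hab : F.Adj a b := (mem_edgeSet F).mp hf₀
    obtain ⟨D₁, hD₁, haD₁⟩ := hcov a
    have hbD₁ : b ∈ D₁ := hpart a b hab D₁ hD₁ haD₁
    set F' := F.deleteEdges {s(a, b)} with hF'def
    set Qa : Set V := {z | F'.Reachable z a} with hQadef
    set Qb : Set V := {z | F'.Reachable z b} with hQbdef
    have hF'le : F' ≤ F := deleteEdges_le _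
    have hQaD₁ : Qa ⊆ D₁ := by
      intro z hz
      obtain ⟨p⟩ := hz
      exact walk_part hpart (p.mapLe hF'le) hD₁ haD₁
    have hQbD₁ : Qb ⊆ D₁ := by
      intro z hz
      obtain ⟨p⟩ := hz
      exact walk_part hpart (p.mapLe hF'le) hD₁ hbD₁
    have hsplit : D₁ = Qa ∪ Qb := by
      apply Set.Subset.antisymm
      · intro z hz
        have : F.Reachable z a := reach_in_induce (hicon D₁ hD₁) hz haD₁
        exact reach_del' (b := b) this
      · exact Set.union_subset hQaD₁ hQbD₁
    have hFacy : F.IsAcyclic := fun x c hc => hT.IsAcyclic (c.mapLe hFle) (hc.mapLe _)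
    have hdisjQ : Disjoint Qa Qb := by
      rw [Set.disjoint_left]
      intro z hza hzb
      have : F'.Reachable a b := (Set.mem_setOf_eq ▸ hza).symm.trans hzb
      have hbr := (isAcyclic_iff_forall_adj_isBridge.mp hFacy) hab
      rw [isBridge_iff] at hbr
      exact hbr this
    have haQa : a ∈ Qa := Reachable.refl _
    have hbQb : b ∈ Qb := Reachable.refl _
    have haQb : a ∉ Qb := fun h => (Set.disjoint_left.mp hdisjQ haQa) h
    -- the new partition
    set 𝒟' : Set (Set V) := insert Qa (insert Qb (𝒟 \ {D₁})) with h𝒟'def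
    have hQanotin : Qa ∉ 𝒟 \ {D₁} := by
      rintro ⟨h1, h2⟩
      exact (Set.disjoint_left.mp (hdisj _ h1 _ hD₁ h2) haQa) haD₁
    have hQbnotin : Qb ∉ 𝒟 \ {D₁} := by
      rintro ⟨h1, h2⟩
      exact (Set.disjoint_left.mp (hdisj _ h1 _ hD₁ h2) hbQb) hbD₁
    have hQaQb : Qa ≠ Qb := fun h => haQb (h ▸ haQa)
    -- new parts are reachability classes
    have hmem𝒟' : ∀ P ∈ 𝒟', (P ∈ 𝒟 ∧ P ≠ D₁) ∨ P = Qa ∨ P = Qb := by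
      intro P hP
      rcases hP with rfl | rfl | ⟨h1, h2⟩
      · exact Or.inr (Or.inl rfl)
      · exact Or.inr (Or.inr rfl)
      · exact Or.inl ⟨h1, h2⟩
    -- induced subgraphs of unchanged parts
    have hunch : ∀ P ∈ 𝒟, P ≠ D₁ → F'.induce P = F.induce P := by
      intro P hP hPne
      ext x y
      show (F'.Adj _ _) ↔ (F.Adj _ _)
      rw [hF'def, deleteEdges_adj]
      simp only [Set.mem_singleton_iff]
      refine ⟨fun h => h.1, fun h => ⟨h, fun heq => ?_⟩⟩
      have hxD : (x : V) ∈ P := x.2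
      have : (x : V) = a ∨ (x : V) = b := by
        rcases Sym2.eq_iff.mp heq with ⟨h1, _⟩ | ⟨h1, _⟩
        · exact Or.inl h1
        · exact Or.inr h1
      have hxD₁ : (x : V) ∈ D₁ := by
        rcases this with rfl | rfl
        · exact haD₁
        · exact hbD₁
      exact (Set.disjoint_left.mp (hdisj _ hP _ hD₁ hPne) hxD) hxD₁
    have hpart' : ∀ x y : V, F'.Adj x y → ∀ D ∈ 𝒟', x ∈ D → y ∈ D := by
      intro x y hxy P hP hx
      have hFxy : F.Adj x y := hF'le hxy
      rcases hmem𝒟' P hP with ⟨h1, _⟩ | rfl | rfl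
      · exact hpart x y hFxy P h1 hx
      · exact (hxy.symm.reachable.trans hx : F'.Reachable y a)
      · exact (hxy.symm.reachable.trans hx : F'.Reachable y b)
    refine ⟨𝒟', F', hF'le.trans hFle, ⟨?_, ?_, ?_⟩, ?_, ?_, hpart', ?_⟩
    · -- parts are nonempty, included in univ, G-connected
      intro P hP
      rcases hmem𝒟' P hP with ⟨h1, _⟩ | rfl | rfl
      · refine ⟨(hparts P h1).1, Set.subset_univ _, ?_⟩
        exact (hparts P h1).2.2
      · exact ⟨⟨a, haQa⟩, Set.subset_univ _,
          induce_connected_mono ((hF'le.trans hFle).trans hTle)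
            (induce_reachClass_connected a)⟩
      · exact ⟨⟨b, hbQb⟩, Set.subset_univ _,
          induce_connected_mono ((hF'le.trans hFle).trans hTle)
            (induce_reachClass_connected b)⟩
    · -- pairwise disjoint
      intro P hP P' hP' hne'
      rcases hmem𝒟' P hP with ⟨h1, h2⟩ | rfl | rfl <;>
        rcases hmem𝒟' P' hP' with ⟨h1', h2'⟩ | rfl | rfl
      · exact hdisj P h1 P' h1' hne'
      · exact Set.disjoint_of_subset_right hQaD₁ (hdisj P h1 D₁ hD₁ h2)
      · exact Set.disjoint_of_subset_right hQbD₁ (hdisj P h1 D₁ hD₁ h2)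
      · exact Set.disjoint_of_subset_left hQaD₁ (hdisj D₁ hD₁ P' h1' (Ne.symm h2'))
      · exact absurd rfl hne'
      · exact hdisjQ
      · exact Set.disjoint_of_subset_left hQbD₁ (hdisj D₁ hD₁ P' h1' (Ne.symm h2'))
      · exact hdisjQ.symm
      · exact absurd rfl hne'
    · -- covers univ
      apply Set.eq_univ_of_forall
      intro x
      obtain ⟨D, hD, hxD⟩ := hcov x
      by_cases hDD₁ : D = D₁
      · subst hDD₁
        rcases (hsplit ▸ hxD : x ∈ Qa ∪ Qb) with h | h
        · exact ⟨Qa, Or.inl rfl, h⟩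
        · exact ⟨Qb, Or.inr (Or.inl rfl), h⟩
      · exact ⟨D, Or.inr (Or.inr ⟨hD, hDD₁⟩), hxD⟩
    · -- cardinality
      have hfin : (𝒟 \ {D₁}).Finite := Set.toFinite _
      rw [h𝒟'def, Set.ncard_insert_of_notMem (by
          rintro (h | h)
          · exact hQaQb h
          · exact hQanotin h) (hfin.insert _),
        Set.ncard_insert_of_notMem hQbnotin hfin,
        Set.ncard_diff_singleton_of_mem hD₁]
      omega
    · -- induced connectivity w.r.t. F'
      intro P hP
      rcases hmem𝒟' P hP with ⟨h1, h2⟩ | rfl | rfl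
      · rw [hunch P h1 h2]
        exact hicon P h1
      · exact induce_reachClass_connected a
      · exact induce_reachClass_connected b
    · -- weight ordering
      intro e heT heF' e' he'
      have he'F : e' ∈ F.edgeSet := by
        rw [hF'def, edgeSet_deleteEdges] at he'
        exact he'.1
      by_cases heF : e ∈ F.edgeSet
      · have : e = s(a, b) := by
          rw [hF'def, edgeSet_deleteEdges] at heF'
          by_contra hne'
          exact heF' ⟨heF, hne'⟩
        rw [this]
        exact hf₀min e' (by rwa [mem_edgeFinset])
      · exact hmin e heT heF e' he'F

end AuxLemmas

/-- every bipartition of a non-singleton optimal cluster has a crossing edge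
in some maximum spanning tree of `G`. -/
theorem statement1 {V : Type*} [Fintype V] (G : SimpleGraph V) (w : Sym2 V → ℝ)
    (hconn : G.Connected) (hw : weightsOK G w) (k : ℕ) (𝒞 : Set (Set V))
    (hopt : IsOptimal G w k 𝒞) (C : Set V) (hC : C ∈ 𝒞) (hCnt : C.Nontrivial)
    (A A' : Set V) (hA : A.Nonempty) (hA' : A'.Nonempty) (hdisj : Disjoint A A')
    (hunion : A ∪ A' = C) :
    ∃ T : SimpleGraph V, IsMaxSpanTree G T w ∧ ∃ a ∈ A, ∃ a' ∈ A', T.Adj a a' := by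
  classical
  by_contra Hc
  push_neg at Hc
  obtain ⟨⟨⟨hparts, hdisjC, hcover⟩, hk⟩, hoptmin⟩ := hopt
  have hCconn : (G.induce C).Connected := (hparts C hC).2.2
  have hAC : A ⊆ C := hunion ▸ Set.subset_union_left
  have hA'C : A' ⊆ C := hunion ▸ Set.subset_union_right
  obtain ⟨T, hT⟩ := exists_maxSpanTree hconn w
  have hex : ∃ T_C : SimpleGraph C, IsMaxSpanTree (G.induce C) T_C (subWeight w C) :=
    exists_maxSpanTree hCconn _
  set T_C := hex.choose with hTCdef
  have hT_C := hex.choose_spec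
  obtain ⟨a0, ha0⟩ := hA
  obtain ⟨b0, hb0⟩ := hA'
  have hmemS : (⟨a0, hAC ha0⟩ : C) ∈ {z : C | (z : V) ∈ A} := ha0
  have hmemS' : (⟨b0, hA'C hb0⟩ : C) ∉ {z : C | (z : V) ∈ A} := by
    intro h
    exact Set.disjoint_left.mp hdisj h hb0
  obtain ⟨u, v, huv, huA, hvA⟩ :=
    connected_cross hT_C.2.1.isConnected.preconnected hmemS hmemS'
  have hvA' : (v : V) ∈ A' := by
    have hvC : (v : V) ∈ A ∪ A' := (Set.ext_iff.mp hunion ↑v).mpr v.2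
    rcases hvC with h | h
    · exact absurd h hvA
    · exact h
  have hGuv : G.Adj ↑u ↑v := hT_C.1 huv
  have hCsub : ¬ C.Subsingleton := fun h => hCnt.not_subsingleton h
  have hminMST : minMST G w C = sInf (subWeight w C '' T_C.edgeSet) := by
    rw [minMST, if_neg hCsub, dif_pos hex]
  have hmem : subWeight w C s(u, v) ∈ subWeight w C '' T_C.edgeSet :=
    ⟨s(u, v), (SimpleGraph.mem_edgeSet _).mpr huv, rfl⟩
  have hsubw : subWeight w C s(u, v) = w s(↑u, ↑v) := by
    simp [subWeight]
  have h1 : minMST G w C ≤ w s(↑u, ↑v) := by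
    rw [hminMST, ← hsubw]
    exact csInf_le (Set.Finite.bddBelow (Set.toFinite _)) hmem
  obtain ⟨x, y, hxyT, hxA, hyA, hle, heqcase⟩ := cross_edge_le hT (S := A) hGuv
    (show (u : V) ∈ A from huA) (show (v : V) ∉ A from hvA)
  have hyA' : y ∉ A' := fun h => Hc T hT x hxA y h hxyT
  have hstrict : w s(↑u, ↑v) < w s(x, y) := by
    rcases lt_or_eq_of_le hle with h | h
    · exact h
    · obtain ⟨T'', hT'', hadj⟩ := heqcase h
      exact absurd hadj (Hc T'' hT'' ↑u huA ↑v hvA')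
  have hyC : y ∉ C := by
    rw [← hunion]
    rintro (h | h)
    · exact hyA h
    · exact hyA' h
  have hout : s(x, y) ∈ outEdges G C :=
    ⟨(SimpleGraph.mem_edgeSet G).mpr (hT.1 hxyT), x, y, rfl, hAC hxA, hyC⟩
  have h2 : w s(x, y) ≤ maxOut G w C :=
    le_csSup (Set.Finite.bddAbove (Set.toFinite _)) ⟨_, hout, rfl⟩
  have hpos : 0 < minMST G w C := by
    rw [hminMST]
    have hfin : (subWeight w C '' T_C.edgeSet).Finite := Set.toFinite _
    have hne : (subWeight w C '' T_C.edgeSet).Nonempty := ⟨_, hmem⟩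
    obtain ⟨e, he, heq'⟩ := hne.csInf_mem hfin
    rw [← heq']
    obtain ⟨p, q, rfl⟩ : ∃ p q, e = s(p, q) := e.ind (fun p q => ⟨p, q, rfl⟩)
    have hGpq : G.Adj ↑p ↑q := hT_C.1 ((SimpleGraph.mem_edgeSet _).mp he)
    have := (hw _ ((SimpleGraph.mem_edgeSet G).mpr hGpq)).1
    show 0 < subWeight w C s(p, q)
    simpa [subWeight] using this
  have hphiC : 1 < phi G w C := by
    rw [phi]
    rw [one_lt_div hpos]
    calc minMST G w C ≤ w s(↑u, ↑v) := h1
    _ < w s(x, y) := hstrict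
    _ ≤ maxOut G w C := h2
  have hevalC : 1 < eval G w 𝒞 :=
    lt_of_lt_of_le hphiC (le_csSup (Set.Finite.bddAbove (Set.toFinite _)) ⟨C, hC, rfl⟩)
  have hk1 : 1 ≤ k := by
    rw [← hk]
    exact (Set.ncard_pos (Set.toFinite 𝒞)).mpr ⟨C, hC⟩
  have hkcard : k ≤ Fintype.card V := by
    have hg : Function.Injective
        (fun D : {D // D ∈ 𝒞} => (hparts D.1 D.2).1.some) := by
      intro D D' hDD'
      by_contra hne
      have hDne : D.1 ≠ D'.1 := fun h => hne (Subtype.ext h)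
      have h1 := (hparts D.1 D.2).1.some_mem
      have h2 := (hparts D'.1 D'.2).1.some_mem
      have hDD2 : (hparts D.1 D.2).1.some = (hparts D'.1 D'.2).1.some := hDD'
      rw [hDD2] at h1
      exact Set.disjoint_left.mp (hdisjC _ D.2 _ D'.2 hDne) h1 h2
    have h2' : Nat.card {D // D ∈ 𝒞} ≤ Nat.card V := Nat.card_le_card_of_injective _ hg
    rw [← hk, ← Nat.card_coe_set_eq]
    exact h2'.trans (le_of_eq (Nat.card_eq_fintype_card (α := V)))
  obtain ⟨𝒟, F, hFle, hPart𝒟, hcard𝒟, hicon, hpartF, hminF⟩ := build (w := w) hT.1 hT.2.1 k hk1 hkcard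
  -- a removed edge exists
  have hk2 : 2 ≤ k := by
    by_contra h
    have hone : k = 1 := by omega
    obtain ⟨D, hDeq⟩ := Set.ncard_eq_one.mp (hone ▸ hk)
    have hCD : C = D := by rw [hDeq] at hC; exact hC
    subst hCD
    rw [hDeq, Set.sUnion_singleton] at hcover
    exact hyC (hcover ▸ Set.mem_univ y)
  obtain ⟨D₁, D₂, hD₁m, hD₂m, hD₁₂⟩ := (Set.one_lt_ncard_iff (Set.toFinite 𝒟)).mp
      (by omega : 1 < 𝒟.ncard)
  obtain ⟨hparts𝒟, hdisj𝒟, hcover𝒟⟩ := hPart𝒟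
  obtain ⟨x₁, hx₁⟩ := (hparts𝒟 D₁ hD₁m).1
  obtain ⟨x₂, hx₂⟩ := (hparts𝒟 D₂ hD₂m).1
  have hx₂D₁ : x₂ ∉ D₁ := fun h =>
    Set.disjoint_left.mp (hdisj𝒟 D₁ hD₁m D₂ hD₂m hD₁₂) h hx₂
  obtain ⟨pw⟩ := hT.2.1.isConnected.preconnected x₁ x₂
  obtain ⟨p', q', _, hpqT, hpD₁, hqD₁⟩ := exists_cross_edge pw hx₁ hx₂D₁
  have hRmem : s(p', q') ∈ T.edgeSet \ F.edgeSet := by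
    refine ⟨(SimpleGraph.mem_edgeSet T).mpr hpqT, fun hFm => ?_⟩
    exact hqD₁ (hpartF p' q' ((SimpleGraph.mem_edgeSet F).mp hFm) D₁ hD₁m hpD₁)
  obtain ⟨f₀, hf₀R, hf₀max⟩ := Set.exists_max_image (T.edgeSet \ F.edgeSet) w
    (Set.toFinite _) ⟨_, hRmem⟩
  set c := w f₀ with hcdef
  have hf₀G : f₀ ∈ G.edgeSet := SimpleGraph.edgeSet_mono hT.1 hf₀R.1
  have hc0 : 0 < c := (hw f₀ hf₀G).1
  have hc1 : c < 1 := (hw f₀ hf₀G).2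
  have hkept : ∀ e ∈ F.edgeSet, c ≤ w e := fun e he => hminF f₀ hf₀R.1 hf₀R.2 e he
  have hphiD : ∀ D ∈ 𝒟, phi G w D ≤ 1 := by
    intro D hD
    have hmaxOut : maxOut G w D ≤ c := by
      apply Real.sSup_le _ hc0.le
      rintro r ⟨e, ⟨heG, pp, qq, rfl, hpp, hqq⟩, rfl⟩
      have hGadj : G.Adj pp qq := (SimpleGraph.mem_edgeSet G).mp heG
      obtain ⟨a, b, habT, haD, hbD, hle', _⟩ := cross_edge_le hT (S := D) hGadj hpp hqq
      have hRab : s(a, b) ∈ T.edgeSet \ F.edgeSet := by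
        refine ⟨(SimpleGraph.mem_edgeSet T).mpr habT, fun hFm => ?_⟩
        exact hbD (hpartF a b ((SimpleGraph.mem_edgeSet F).mp hFm) D hD haD)
      exact hle'.trans (hf₀max _ hRab)
    by_cases hsub : D.Subsingleton
    · rw [phi, minMST, if_pos hsub, div_one]
      linarith
    · have hDconn : (G.induce D).Connected := (hparts𝒟 D hD).2.2
      have hexD : ∃ T_D : SimpleGraph D, IsMaxSpanTree (G.induce D) T_D (subWeight w D) :=
        exists_maxSpanTree hDconn _
      have hminD : c ≤ minMST G w D := by
        rw [minMST, if_neg hsub, dif_pos hexD]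
        apply le_csInf
        · rw [Set.not_subsingleton_iff] at hsub
          obtain ⟨x, hx, y, hy, hxy⟩ := hsub
          have hne' : (⟨x, hx⟩ : D) ≠ ⟨y, hy⟩ := fun h => hxy (congrArg Subtype.val h)
          obtain ⟨u', v', hu'v'⟩ :=
            exists_adj_of_ne hexD.choose_spec.2.1.isConnected.preconnected hne'
          exact ⟨_, ⟨s(u', v'), (SimpleGraph.mem_edgeSet _).mpr hu'v', rfl⟩⟩
        · rintro r ⟨e, he, rfl⟩
          obtain ⟨β, γ, rfl⟩ : ∃ β γ, e = s(β, γ) := e.ind (fun β γ => ⟨β, γ, rfl⟩)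
          have hadj : hexD.choose.Adj β γ := (SimpleGraph.mem_edgeSet _).mp he
          have hSle : F.induce D ≤ G.induce D := fun x y hxy => (hFle.trans hT.1) hxy
          obtain ⟨x', y', hx'y', hwle⟩ := bottleneck hexD.choose_spec hSle (hicon D hD) hadj
          have hFe : s((x' : V), (y' : V)) ∈ F.edgeSet := (SimpleGraph.mem_edgeSet F).mpr hx'y'
          calc c ≤ w s((x' : V), (y' : V)) := hkept _ hFe
          _ = subWeight w D s(x', y') := by simp [subWeight]
          _ ≤ subWeight w D s(β, γ) := hwle
      rw [phi, div_le_one (lt_of_lt_of_le hc0 hminD)]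
      linarith
  have hclus : IsClustering G 𝒟 k := ⟨⟨hparts𝒟, hdisj𝒟, hcover𝒟⟩, hcard𝒟⟩
  have heval𝒟 : eval G w 𝒟 ≤ 1 := by
    apply Real.sSup_le _ one_pos.le
    rintro r ⟨D, hD, rfl⟩
    exact hphiD D hD
  have := hoptmin 𝒟 hclus
  linarith



end Bal
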